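/- Let 1 ≤ d ≤ r and 0 ≤ k ≤ d be integers. Then for every 0 ≤ i ≤ d, C(r−1, d, ir−k) = Σ_{j=0}^{k−1} C(r−1, d−1, (i−1)r−j) + Σ_{j=k}^{r−1} C(r−1, d−1, ir−j); equivalently, C^{r,d}_k = Σ_{j=0}^{k−1} (0, C^{r,d−1}_j) + Σ_{j=k}^{r−1} (C^{r,d−1}_j, 0), where (0,v) and (v,0) denote prepending, respectively appending, a zero entry to the vector v. -/

import Mathlib

/-- `vC r d i` is the number of tuples `(u₁,…,u_d) ∈ ℤ^d` with `0 ≤ uₗ ≤ r` for all `l`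
and `u₁ + ⋯ + u_d = i`.  For `d = 0` this is `1` if `i = 0` and `0` otherwise. -/
def vC (r d : ℕ) (i : ℤ) : ℕ :=
  (Finset.univ.filter fun u : Fin d → Fin (r + 1) => (∑ l, ((u l : ℕ) : ℤ)) = i).card

/-- `gHat r d k i` is the `(i+1)`-st entry (`0 ≤ i ≤ ⌊d/2⌋+1`) of the vector
`ĝ^{r,d}_k ∈ ℤ^{⌊d/2⌋+2}`, defined by `g₀ = C(r−1,d,−k)` and
`g_i = C(r−1,d,ir−k) − C(r−1,d,(i−1)r−k)` for `i ≥ 1`; for `k ≥ r` the vector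
`ĝ^{r,d}_k` is the zero vector.  The vector `g^{r,d}_k ∈ ℤ^{⌊d/2⌋+1}` is obtained
from `ĝ^{r,d}_k` by deleting its last entry, so its entries are `gHat r d k i`
for `0 ≤ i ≤ ⌊d/2⌋`; `last (g^{r,d}_k) = gHat r d k (d/2)` and
`last (ĝ^{r,d}_k) = gHat r d k (d/2 + 1)`. -/
def gHat (r d k : ℕ) (i : ℕ) : ℤ :=
  if r ≤ k then 0
  else if i = 0 then (vC (r - 1) d (-(k : ℤ)) : ℤ)
  else (vC (r - 1) d ((i : ℤ) * (r : ℤ) - (k : ℤ)) : ℤ)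
       - (vC (r - 1) d (((i : ℤ) - 1) * (r : ℤ) - (k : ℤ)) : ℤ)

/-- Let `1 ≤ d ≤ r` and `0 ≤ k ≤ d`.  Then for every `0 ≤ i ≤ d`,
`C(r−1, d, ir−k) = ∑_{j=0}^{k−1} C(r−1, d−1, (i−1)r−j) + ∑_{j=k}^{r−1} C(r−1, d−1, ir−j)`,
i.e. `C^{r,d}_k = ∑_{j=0}^{k−1} (0, C^{r,d−1}_j) + ∑_{j=k}^{r−1} (C^{r,d−1}_j, 0)`. -/
lemma vC_succ (r m : ℕ) (i : ℤ) :
    vC r (m + 1) i = ∑ v ∈ Finset.range (r + 1), vC r m (i - (v : ℤ)) := by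
  unfold vC
  rw [← Fin.sum_univ_eq_sum_range (fun v : ℕ => (Finset.univ.filter
      fun u : Fin m → Fin (r + 1) => (∑ l, ((u l : ℕ) : ℤ)) = i - (v : ℤ)).card)]
  rw [Finset.card_eq_sum_card_fiberwise (f := fun u : Fin (m+1) → Fin (r+1) => u 0)
      (t := Finset.univ) (fun x _ => Finset.mem_univ _)]
  refine Finset.sum_congr rfl fun v _ => ?_
  refine Finset.card_bij' (fun u _ => Fin.tail u) (fun u _ => Fin.cons v u) ?_ ?_ ?_ ?_
  · intro u hu
    simp only [Finset.mem_filter, Finset.mem_univ, true_and] at hu ⊢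
    obtain ⟨h1, h2⟩ := hu
    rw [Fin.sum_univ_succ] at h1
    rw [← h1, h2]
    simp [Fin.tail]
  · intro u hu
    simp only [Finset.mem_filter, Finset.mem_univ, true_and] at hu ⊢
    constructor
    · rw [Fin.sum_univ_succ]
      simp [hu]
    · simp
  · intro u hu
    simp only [Finset.mem_filter, Finset.mem_univ, true_and] at hu
    show Fin.cons v (Fin.tail u) = u
    rw [← hu.2]
    exact Fin.cons_self_tail u
  · intro u hu; rfl

theorem stmt_7 (r d k : ℕ) (hd : 1 ≤ d) (hdr : d ≤ r) (hk : k ≤ d) :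
    ∀ i : ℕ, i ≤ d →
      (vC (r - 1) d ((i : ℤ) * (r : ℤ) - (k : ℤ)) : ℤ)
        = (∑ j ∈ Finset.range k,
            (vC (r - 1) (d - 1) (((i : ℤ) - 1) * (r : ℤ) - (j : ℤ)) : ℤ))
          + ∑ j ∈ Finset.Ico k r,
            (vC (r - 1) (d - 1) ((i : ℤ) * (r : ℤ) - (j : ℤ)) : ℤ) := by
  intro i _
  have hr : 1 ≤ r := le_trans hd hdr
  have hkr : k ≤ r := le_trans hk hdr
  obtain ⟨m, rfl⟩ : ∃ m, d = m + 1 := ⟨d - 1, (Nat.succ_pred_eq_of_pos hd).symm⟩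
  have h1 : r - 1 + 1 = r := Nat.succ_pred_eq_of_pos hr
  simp only [Nat.add_sub_cancel]
  rw [vC_succ, h1, Nat.cast_sum, show Finset.range r = Finset.Ico 0 r from Finset.range_eq_Ico r,
    ← Finset.sum_Ico_consecutive _ (Nat.zero_le (r - k)) (Nat.sub_le r k), add_comm]
  congr 1
  · rw [Finset.sum_Ico_eq_sum_range, Nat.sub_sub_self hkr]
    refine Finset.sum_congr rfl fun x hx => ?_
    congr 1
    push_cast [Nat.cast_sub hkr]
    ring
  · rw [show Finset.Ico 0 (r - k) = Finset.range (r - k) from (Finset.range_eq_Ico (r-k)).symm]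
    rw [show (∑ x ∈ Finset.Ico k r, (vC (r - 1) m ((i:ℤ) * r - (x:ℤ)) : ℤ))
        = ∑ x ∈ Finset.range (r - k), (vC (r - 1) m ((i:ℤ) * r - ((k + x : ℕ):ℤ)) : ℤ)
      from Finset.sum_Ico_eq_sum_range (fun x => (vC (r - 1) m ((i:ℤ) * r - (x:ℤ)) : ℤ)) k r]
    refine Finset.sum_congr rfl fun x hx => ?_
    congr 1
    push_cast
    ring
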